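/- arXiv:2002.11648 — 7 statements merged into one kernel-verified Lean document; each statement's English description precedes it below -/
import Mathlib

section
/- For all γ ∈ (0,1) and φ > 0, the function H(γ) = φ·(γ/2)/(1 + γ/2) satisfies H(γ) > (φ/3)γ, and consequently v_−(γ) < H(γ) where v_−(γ) = φ·(1 − γ/2 + γ²/4 − √(1−γ))/(3 − γ + γ²/4). -/
theorem H_gt_third_gamma_and_v_minus_lt_H
    (γ φ : ℝ) (hγ0 : 0 < γ) (hγ1 : γ < 1) (hφ : 0 < φ) :
    φ * (γ / 2) / (1 + γ / 2) > (φ / 3) * γ ∧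
    φ * (1 - γ / 2 + γ ^ 2 / 4 - Real.sqrt (1 - γ)) / (3 - γ + γ ^ 2 / 4)
      < φ * (γ / 2) / (1 + γ / 2) := by
  have h1 : (0:ℝ) < 1 + γ / 2 := by linarith
  have hD : (0:ℝ) < 3 - γ + γ ^ 2 / 4 := by nlinarith
  have hs0 : 0 ≤ Real.sqrt (1 - γ) := Real.sqrt_nonneg _
  have hs2 : 1 - γ ≤ Real.sqrt (1 - γ) := by
    nlinarith [Real.sq_sqrt (by linarith : (0:ℝ) ≤ 1 - γ)]
  constructor
  · rw [gt_iff_lt, lt_div_iff₀ h1]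
    nlinarith [mul_pos hφ (mul_pos hγ0 (by linarith : (0:ℝ) < 1 - γ))]
  · rw [div_lt_div_iff₀ hD h1]
    nlinarith [mul_pos hφ (mul_pos hγ0 (by linarith : (0:ℝ) < 1 - γ)),
      mul_le_mul_of_nonneg_left hs2 hφ.le]
end

section
/- For γ ∈ (0,1) and φ > 0, v_+(γ) := (φ/2)·((2 − γ + γ²/2) + 2√(1−γ))/(3 − γ + γ²/4) is strictly decreasing in γ, with limit 2φ/3 as γ → 0 and value φ/3 at γ = 1; moreover v_+(γ) > H(γ) := φ·(γ/2)/(1+γ/2) for all γ ∈ (0,1). -/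
theorem v_plus_decreasing_limits_and_gt_H
    (φ : ℝ) (hφ : 0 < φ) (vp : ℝ → ℝ)
    (hvp : ∀ γ, vp γ = (φ / 2) * ((2 - γ + γ ^ 2 / 2) + 2 * Real.sqrt (1 - γ))
        / (3 - γ + γ ^ 2 / 4)) :
    StrictAntiOn vp (Set.Ioo 0 1) ∧
    Filter.Tendsto vp (nhdsWithin 0 (Set.Ioi 0)) (nhds (2 * φ / 3)) ∧
    vp 1 = φ / 3 ∧
    ∀ γ ∈ Set.Ioo (0 : ℝ) 1, vp γ > φ * (γ / 2) / (1 + γ / 2) := by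
  -- substitution form: with s = √(1-γ), vp γ = φ (3+4s+s⁴)/(9+2s²+s⁴)
  have gform : ∀ γ : ℝ, γ ≤ 1 →
      vp γ = φ * (3 + 4 * Real.sqrt (1 - γ) + (Real.sqrt (1 - γ)) ^ 4)
        / (9 + 2 * (Real.sqrt (1 - γ)) ^ 2 + (Real.sqrt (1 - γ)) ^ 4) := by
    intro γ hγ
    rw [hvp]
    set s := Real.sqrt (1 - γ) with hs
    have hs2 : s ^ 2 = 1 - γ := Real.sq_sqrt (by linarith)
    have hγeq : γ = 1 - s ^ 2 := by linarith
    have h1 : (0:ℝ) < 3 - γ + γ ^ 2 / 4 := by nlinarith [sq_nonneg (γ - 2)]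
    have h2 : (0:ℝ) < 9 + 2 * s ^ 2 + s ^ 4 := by positivity
    rw [hγeq]
    have h1' : (0:ℝ) < 3 - (1 - s ^ 2) + (1 - s ^ 2) ^ 2 / 4 := by
      nlinarith [sq_nonneg s, sq_nonneg (1 - s ^ 2)]
    rw [div_eq_div_iff h1'.ne' h2.ne']
    ring
  refine ⟨?_, ?_, ?_, ?_⟩
  · -- strict antitone
    intro a ha b hb hab
    obtain ⟨ha0, ha1⟩ := ha
    obtain ⟨hb0, hb1⟩ := hb
    rw [gform a ha1.le, gform b hb1.le]
    set p := Real.sqrt (1 - a) with hp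
    set q := Real.sqrt (1 - b) with hq
    have hq0 : 0 ≤ q := Real.sqrt_nonneg _
    have hqp : q < p := Real.sqrt_lt_sqrt (by linarith) (by linarith)
    have hp1 : p < 1 := by
      have h := Real.sqrt_lt_sqrt (by linarith : (0:ℝ) ≤ 1 - a) (by linarith : 1 - a < 1)
      rwa [Real.sqrt_one] at h
    rw [div_lt_div_iff₀ (by positivity) (by positivity)]
    have hp0 : 0 < p := lt_of_le_of_lt hq0 hqp
    have hq1 : q ≤ 1 := le_of_lt (lt_trans hqp hp1)
    have hK : 0 < 36 - 6*(p+q) + 6*(p+q)*(p^2+q^2) - 8*p*q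
        - 4*p*q*(p^2+p*q+q^2) + 2*p^2*q^2*(p+q) := by
      nlinarith [mul_nonneg hq0 hp0.le,
        mul_nonneg (mul_nonneg hq0 hp0.le) (sub_nonneg.2 hp1.le),
        mul_nonneg (mul_nonneg hq0 hp0.le) (sub_nonneg.2 hq1),
        mul_nonneg (mul_nonneg (mul_nonneg hq0 hp0.le) hq0) (sub_nonneg.2 hp1.le),
        mul_nonneg (mul_nonneg (mul_nonneg hq0 hp0.le) hp0.le) (sub_nonneg.2 hp1.le),
        sq_nonneg (p - q), sq_nonneg (p + q), hp1.le, hq1]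
    nlinarith [mul_pos hφ (mul_pos (sub_pos.2 hqp) hK)]
  · -- limit as γ → 0⁺
    have hfun : vp = fun γ => (φ / 2) * ((2 - γ + γ ^ 2 / 2) + 2 * Real.sqrt (1 - γ))
        / (3 - γ + γ ^ 2 / 4) := funext hvp
    have hc : ContinuousAt vp 0 := by
      rw [hfun]
      apply ContinuousAt.div
      · exact (continuousAt_const.mul (((continuousAt_const.sub continuousAt_id).add
          ((continuousAt_id.pow 2).div_const 2)).add (continuousAt_const.mul
          ((Real.continuous_sqrt.comp (continuous_const.sub continuous_id)).continuousAt))))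
      · fun_prop
      · norm_num
    have h0 : vp 0 = 2 * φ / 3 := by
      rw [hvp]; norm_num [Real.sqrt_one]; ring
    have h := hc.tendsto.mono_left (nhdsWithin_le_nhds (s := Set.Ioi (0:ℝ)))
    rwa [h0] at h
  · rw [hvp]; norm_num; ring
  · intro γ hγ
    obtain ⟨h0, h1⟩ := hγ
    have hs : 0 ≤ Real.sqrt (1 - γ) := Real.sqrt_nonneg _
    rw [hvp, gt_iff_lt, div_lt_div_iff₀ (by linarith) (by nlinarith [sq_nonneg (γ - 2)])]
    nlinarith [mul_nonneg (mul_nonneg hφ.le hs) (by linarith : (0:ℝ) ≤ 1 + γ / 2),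
      mul_pos hφ (by nlinarith : (0:ℝ) < 4 - 6*γ + 2*γ^2)]
end

section
/- Let γ ∈ (0,1), φ > 0, Q(v) = v²(3 − γ + γ²/4) + vφ(−2 + γ − γ²/2) + (γ²/4)φ², and let v_− be the smaller root of Q. Define F(v) = v(2 − γ) − (v + ((φ − v)/2)γ − √(Q(v))) for v ∈ [0, v_−). Then F(0) = 0 and F'(v) = 1 − γ/2 + Q'(v)/(2√(Q(v))) < 0 on (0, v_−); consequently F(v) < 0 for all v ∈ (0, v_−). -/
set_option maxHeartbeats 1000000 in
theorem fold_improvement_negative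
    (γ φ : ℝ) (hγ0 : 0 < γ) (hγ1 : γ < 1) (hφ : 0 < φ)
    (Q F : ℝ → ℝ)
    (hQ : ∀ v, Q v = v ^ 2 * (3 - γ + γ ^ 2 / 4)
        + v * φ * (-2 + γ - γ ^ 2 / 2) + (γ ^ 2 / 4) * φ ^ 2)
    (vminus : ℝ)
    (hvm : vminus = φ * (1 - γ / 2 + γ ^ 2 / 4 - Real.sqrt (1 - γ))
        / (3 - γ + γ ^ 2 / 4))
    (hF : ∀ v, F v = v * (2 - γ)
        - (v + ((φ - v) / 2) * γ - Real.sqrt (Q v))) :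
    F 0 = 0 ∧
    (∀ v ∈ Set.Ioo 0 vminus,
      HasDerivAt F (1 - γ / 2 + deriv Q v / (2 * Real.sqrt (Q v))) v ∧
      1 - γ / 2 + deriv Q v / (2 * Real.sqrt (Q v)) < 0) ∧
    (∀ v ∈ Set.Ioo 0 vminus, F v < 0) := by
  have hA : (0:ℝ) < 3 - γ + γ ^ 2 / 4 := by nlinarith
  have hr0 : 0 < Real.sqrt (1 - γ) := Real.sqrt_pos.mpr (by linarith)
  have hr2 : Real.sqrt (1 - γ) ^ 2 = 1 - γ := Real.sq_sqrt (by linarith)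
  have hQfun : Q = fun v => v ^ 2 * (3 - γ + γ ^ 2 / 4)
      + v * φ * (-2 + γ - γ ^ 2 / 2) + (γ ^ 2 / 4) * φ ^ 2 := funext hQ
  -- derivative of Q
  have hQd : ∀ v : ℝ, HasDerivAt Q
      (2 * v * (3 - γ + γ ^ 2 / 4) + φ * (-2 + γ - γ ^ 2 / 2)) v := by
    intro v
    have h1 : HasDerivAt (fun v : ℝ => v ^ 2 * (3 - γ + γ ^ 2 / 4)
        + v * (φ * (-2 + γ - γ ^ 2 / 2)) + (γ ^ 2 / 4) * φ ^ 2)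
        (2 * v * (3 - γ + γ ^ 2 / 4) + φ * (-2 + γ - γ ^ 2 / 2)) v := by
      have h2 := (((hasDerivAt_pow 2 v).mul_const (3 - γ + γ ^ 2 / 4)).add
        ((hasDerivAt_id v).mul_const (φ * (-2 + γ - γ ^ 2 / 2)))).add_const
        ((γ ^ 2 / 4) * φ ^ 2)
      refine h2.congr_deriv ?_
      push_cast
      ring
    have heq : Q = fun v : ℝ => v ^ 2 * (3 - γ + γ ^ 2 / 4)
        + v * (φ * (-2 + γ - γ ^ 2 / 2)) + (γ ^ 2 / 4) * φ ^ 2 := by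
      funext x; rw [hQ x]; ring
    rw [heq]
    exact h1
  have hQderiv : ∀ v : ℝ, deriv Q v
      = 2 * v * (3 - γ + γ ^ 2 / 4) + φ * (-2 + γ - γ ^ 2 / 2) :=
    fun v => (hQd v).deriv
  -- key bound for v in the interval
  have hkey : ∀ v ∈ Set.Ioo (0:ℝ) vminus,
      v * (3 - γ + γ ^ 2 / 4) < φ * (1 - γ / 2 + γ ^ 2 / 4 - Real.sqrt (1 - γ)) := by
    rintro v ⟨hv0, hv1⟩
    rw [hvm] at hv1
    exact (lt_div_iff₀ hA).mp hv1
  -- positivity of Q on the interval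
  have hQpos : ∀ v ∈ Set.Ioo (0:ℝ) vminus, 0 < Q v := by
    rintro v hv
    have hv0 := hv.1
    have key := hkey v hv
    have h4 : Real.sqrt (1 - γ) * φ
        < φ * (1 - γ / 2 + γ ^ 2 / 4) - v * (3 - γ + γ ^ 2 / 4) := by
      nlinarith [mul_pos hr0 hφ]
    have hpos : 0 < Real.sqrt (1 - γ) * φ := mul_pos hr0 hφ
    have h3 : (Real.sqrt (1 - γ) * φ) ^ 2
        < (φ * (1 - γ / 2 + γ ^ 2 / 4) - v * (3 - γ + γ ^ 2 / 4)) ^ 2 := by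
      nlinarith [hpos, h4]
    have h5 : 0 < (3 - γ + γ ^ 2 / 4) * (v ^ 2 * (3 - γ + γ ^ 2 / 4)
        + v * φ * (-2 + γ - γ ^ 2 / 2) + (γ ^ 2 / 4) * φ ^ 2) := by
      nlinarith [h3, hr2]
    rw [hQ]
    nlinarith [h5, hA]
  -- negativity of Q' on the interval
  have hQ'neg : ∀ v ∈ Set.Ioo (0:ℝ) vminus,
      2 * v * (3 - γ + γ ^ 2 / 4) + φ * (-2 + γ - γ ^ 2 / 2) < 0 := by
    intro v hv
    have key := hkey v hv
    nlinarith [mul_pos hr0 hφ]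
  -- squared comparison
  have hsqcmp : ∀ v ∈ Set.Ioo (0:ℝ) vminus,
      (2 - γ) ^ 2 * Q v
        < (2 * v * (3 - γ + γ ^ 2 / 4) + φ * (-2 + γ - γ ^ 2 / 2)) ^ 2 := by
    intro v hv
    have h6 : 0 < (3 - γ + γ ^ 2 / 4) *
        ((2 * v * (3 - γ + γ ^ 2 / 4) + φ * (-2 + γ - γ ^ 2 / 2)) ^ 2
          - (2 - γ) ^ 2 * (v ^ 2 * (3 - γ + γ ^ 2 / 4)
            + v * φ * (-2 + γ - γ ^ 2 / 2) + (γ ^ 2 / 4) * φ ^ 2)) := by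
      nlinarith [sq_nonneg (2 * (3 - γ + γ ^ 2 / 4) * v + (-2 + γ - γ ^ 2 / 2) * φ),
        mul_pos (mul_pos (show (0:ℝ) < 1 - γ by linarith)
          (show (0:ℝ) < (2 - γ) ^ 2 by nlinarith)) (pow_pos hφ 2)]
    rw [hQ]
    nlinarith [h6, hA]
  -- derivative of F
  have hFfun : F = fun v => v * (1 - γ / 2) - φ * γ / 2 + Real.sqrt (Q v) := by
    funext v; rw [hF v]; ring
  have hFd : ∀ v ∈ Set.Ioo (0:ℝ) vminus,
      HasDerivAt F (1 - γ / 2 + deriv Q v / (2 * Real.sqrt (Q v))) v := by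
    intro v hv
    have hQv := hQpos v hv
    have hs : 0 < Real.sqrt (Q v) := Real.sqrt_pos.mpr hQv
    have hsqrt := (Real.hasDerivAt_sqrt (ne_of_gt hQv)).comp v (hQd v)
    have hlin : HasDerivAt (fun v : ℝ => v * (1 - γ / 2) - φ * γ / 2)
        (1 - γ / 2) v := by
      simpa using ((hasDerivAt_id v).mul_const (1 - γ / 2)).sub_const (φ * γ / 2)
    have h := hlin.add hsqrt
    rw [hFfun]
    refine h.congr_deriv ?_
    rw [hQderiv v]
    ring
  -- derivative negative
  have hFd' : ∀ v ∈ Set.Ioo (0:ℝ) vminus,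
      1 - γ / 2 + deriv Q v / (2 * Real.sqrt (Q v)) < 0 := by
    intro v hv
    have hQv := hQpos v hv
    have hs : 0 < Real.sqrt (Q v) := Real.sqrt_pos.mpr hQv
    have hs2 : Real.sqrt (Q v) ^ 2 = Q v := Real.sq_sqrt hQv.le
    have hneg := hQ'neg v hv
    have hcmp := hsqcmp v hv
    have ha2 : ((2 - γ) * Real.sqrt (Q v)) ^ 2 = (2 - γ) ^ 2 * Q v := by
      rw [mul_pow, hs2]
    have hlt : (2 - γ) * Real.sqrt (Q v)
        < -(2 * v * (3 - γ + γ ^ 2 / 4) + φ * (-2 + γ - γ ^ 2 / 2)) := by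
      apply lt_of_pow_lt_pow_left₀ 2 (by linarith)
      rw [ha2, neg_pow]
      simpa using hcmp
    rw [hQderiv v]
    have heq : 1 - γ / 2 + (2 * v * (3 - γ + γ ^ 2 / 4) + φ * (-2 + γ - γ ^ 2 / 2))
          / (2 * Real.sqrt (Q v))
        = ((2 - γ) * Real.sqrt (Q v)
            + (2 * v * (3 - γ + γ ^ 2 / 4) + φ * (-2 + γ - γ ^ 2 / 2)))
          / (2 * Real.sqrt (Q v)) := by
      field_simp
    rw [heq]
    exact div_neg_of_neg_of_pos (by linarith) (by linarith)
  -- F 0 = 0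
  have hF0 : F 0 = 0 := by
    rw [hF 0, hQ 0]
    have : (0:ℝ) ^ 2 * (3 - γ + γ ^ 2 / 4) + 0 * φ * (-2 + γ - γ ^ 2 / 2)
        + (γ ^ 2 / 4) * φ ^ 2 = (γ * φ / 2) ^ 2 := by ring
    rw [this, Real.sqrt_sq (by positivity)]
    ring
  refine ⟨hF0, fun v hv => ⟨hFd v hv, hFd' v hv⟩, ?_⟩
  -- F < 0 on the interval via strict antitonicity
  intro v hv
  have hQcont : Continuous Q := by rw [hQfun]; continuity
  have hFcont : Continuous F := by
    rw [hFfun]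
    exact ((continuous_id.mul continuous_const).sub continuous_const).add
      (hQcont.sqrt)
  have hanti : StrictAntiOn F (Set.Icc 0 vminus) := by
    apply strictAntiOn_of_deriv_neg (convex_Icc 0 vminus) hFcont.continuousOn
    intro x hx
    rw [interior_Icc] at hx
    rw [(hFd x hx).deriv]
    exact hFd' x hx
  obtain ⟨hv0, hv1⟩ := hv
  have := hanti (Set.mem_Icc.mpr ⟨le_refl 0, by linarith⟩)
    (Set.mem_Icc.mpr ⟨hv0.le, hv1.le⟩) hv0
  rw [hF0] at this
  exact this
end

section
/- Two-player no-benefit theorem: for any budgets 0 < X_B < X_A, total value φ > 0, battlefield value v_b ∈ (0, φ), and pre-commitment t ∈ (0, X_B], the weaker player's payoff under the adversary's best response, −max{u_A^call(t), u_A^fold(t)}, is strictly less than its baseline payoff φ(X_B/X_A − 1). -/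
theorem two_player_no_benefit
    (X_A X_B φ v t : ℝ)
    (hB : 0 < X_B) (hBA : X_B < X_A) (hφ : 0 < φ)
    (hv : 0 < v) (hvφ : v < φ)
    (ht0 : 0 < t) (htB : t ≤ X_B) :
    -max ((φ - v) * (1 - (X_B - t) / (X_A - t)) + v)
         ((φ - v) * (1 - (X_B - t) / X_A) - v)
      < φ * (X_B / X_A - 1) := by
  have hA : 0 < X_A := by linarith
  have hAt : 0 < X_A - t := by linarith
  have hd : 0 < X_A - X_B := by linarith
  have h1 : 1 - (X_B - t) / (X_A - t) = (X_A - X_B) / (X_A - t) := by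
    field_simp; ring
  have h2 : φ * (X_B / X_A - 1) = -(φ * ((X_A - X_B) / X_A)) := by
    field_simp; ring
  have hr12 : (X_A - X_B) / X_A < (X_A - X_B) / (X_A - t) :=
    div_lt_div_of_pos_left hd hAt (by linarith)
  have hr1 : (X_A - X_B) / X_A < 1 := by
    rw [div_lt_one hA]; linarith
  have key : φ * ((X_A - X_B) / X_A) < (φ - v) * (1 - (X_B - t) / (X_A - t)) + v := by
    rw [h1]
    nlinarith [mul_pos (by linarith : (0:ℝ) < φ - v) (sub_pos.mpr hr12),
      mul_pos hv (sub_pos.mpr hr1)]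
  have hmax := le_max_left ((φ - v) * (1 - (X_B - t) / (X_A - t)) + v)
      ((φ - v) * (1 - (X_B - t) / X_A) - v)
  rw [h2]
  linarith
end

section
/- In the three-player setting with budgets X_1, X_2 ∈ (0,1), X_A = 1, battlefield-set values φ₁, φ₂ > 0, v_b ∈ (0, φ₁), and Case 1 (i=1) baseline payoff π₁ = φ₁(X₁ − 1): for t* = X₁ − ((φ₁ − v_b)/φ₂)X₂ > 0, the inequality (φ₁ − v_b)·(1 − (1 − √(φ₂·((X₁−t*)/(1−t*))·(X₂/(1−t*))/(φ₁−v_b)))/((X₁−t*)/(1−t*))) − v_b ≥ φ₁(X₁ − 1) holds if and only if φ₂(X₁ + X₂ − 1) ≥ (φ₁ − v_b)X₂(X₁ − 1) + v_b·X₁·X₂. -/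
theorem three_player_case1_precommit_iff
    (X1 X2 φ1 φ2 vb : ℝ)
    (hX1 : 0 < X1) (hX1' : X1 < 1) (hX2 : 0 < X2) (hX2' : X2 < 1)
    (hφ1 : 0 < φ1) (hφ2 : 0 < φ2) (hvb : 0 < vb) (hvbφ : vb < φ1)
    (t : ℝ) (ht : t = X1 - ((φ1 - vb) / φ2) * X2) (ht0 : 0 < t) :
    ((φ1 - vb) * (1 -
        (1 - Real.sqrt (φ2 * ((X1 - t) / (1 - t)) * (X2 / (1 - t)) / (φ1 - vb)))
          / ((X1 - t) / (1 - t))) - vb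
      ≥ φ1 * (X1 - 1))
    ↔ φ2 * (X1 + X2 - 1) ≥ (φ1 - vb) * X2 * (X1 - 1) + vb * X1 * X2 := by
  have hφvb : 0 < φ1 - vb := by linarith
  have hd : X1 - t = (φ1 - vb) / φ2 * X2 := by rw [ht]; ring
  have hdpos : 0 < X1 - t := by
    rw [hd]; positivity
  have h1t : 0 < 1 - t := by linarith
  have harg : φ2 * ((X1 - t) / (1 - t)) * (X2 / (1 - t)) / (φ1 - vb)
      = (X2 / (1 - t)) ^ 2 := by
    rw [hd]; field_simp
  have hsqrt : Real.sqrt (φ2 * ((X1 - t) / (1 - t)) * (X2 / (1 - t)) / (φ1 - vb))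
      = X2 / (1 - t) := by
    rw [harg, Real.sqrt_sq (by positivity)]
  have key : (φ1 - vb) * (1 -
        (1 - Real.sqrt (φ2 * ((X1 - t) / (1 - t)) * (X2 / (1 - t)) / (φ1 - vb)))
          / ((X1 - t) / (1 - t))) - vb
      = φ2 * (X1 + X2 - 1) / X2 - vb := by
    have h1 : (1 - t) ≠ 0 := ne_of_gt h1t
    have h2 : X1 - t ≠ 0 := ne_of_gt hdpos
    have h3 : φ2 ≠ 0 := ne_of_gt hφ2
    have h4 : X2 ≠ 0 := ne_of_gt hX2
    have h5 : φ1 - vb ≠ 0 := ne_of_gt hφvb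
    have hr : (1 - X2 / (1 - t)) / ((X1 - t) / (1 - t)) = (1 - t - X2) / (X1 - t) := by
      field_simp
    rw [hsqrt, hr]
    have hX1e : X1 = (φ1 - vb) / φ2 * X2 + t := by linarith
    rw [hd, hX1e]
    field_simp
    ring
  rw [ge_iff_le, key, le_sub_iff_add_le, le_div_iff₀ hX2, ge_iff_le]
  have hring : (φ1 * (X1 - 1) + vb) * X2
      = (φ1 - vb) * X2 * (X1 - 1) + vb * X1 * X2 := by ring
  constructor <;> intro h <;> linarith
end

section
/- In the three-player setting with Case 2 (i=1) baseline: for budgets X₁, X₂ ∈ (0,1), X_A = 1, φ₁, φ₂ > 0, v_b ∈ (0, φ₁) and t* = X₁ − ((φ₁ − v_b)/φ₂)X₂ > 0, player 1's payoff from pre-committing t* (A calling, Case 2 (i=2) split after renormalization) is at least its baseline payoff φ₁(X₁/√(φ₁X₁X₂/φ₂) − 1) if and only if φ₂(X₁ + X₂ − 1) ≥ √(φ₁φ₂X₁X₂) − (φ₁ − v_b)X₂. -/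
theorem three_player_case2_precommit_iff
    (X1 X2 φ1 φ2 vb : ℝ)
    (hX1 : 0 < X1) (hX1' : X1 < 1) (hX2 : 0 < X2) (hX2' : X2 < 1)
    (hφ1 : 0 < φ1) (hφ2 : 0 < φ2) (hvb : 0 < vb) (hvbφ : vb < φ1)
    (t : ℝ) (ht : t = X1 - ((φ1 - vb) / φ2) * X2) (ht0 : 0 < t) :
    ((φ1 - vb) * (1 -
        (1 - Real.sqrt (φ2 * ((X1 - t) / (1 - t)) * (X2 / (1 - t)) / (φ1 - vb)))
          / ((X1 - t) / (1 - t))) - vb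
      ≥ φ1 * (X1 / Real.sqrt (φ1 * X1 * X2 / φ2) - 1))
    ↔ φ2 * (X1 + X2 - 1) ≥ Real.sqrt (φ1 * φ2 * X1 * X2) - (φ1 - vb) * X2 := by
  have hφvb : 0 < φ1 - vb := by linarith
  have ht1 : t < 1 := by
    have : 0 < (φ1 - vb) / φ2 * X2 := by positivity
    linarith [ht ▸ (by linarith : X1 - (φ1 - vb) / φ2 * X2 < 1)]
  have h1t : 0 < 1 - t := by linarith
  have hXt : X1 - t = (φ1 - vb) / φ2 * X2 := by rw [ht]; ring
  set S := Real.sqrt (φ1 * φ2 * X1 * X2) with hSdef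
  have hSpos : 0 < S := Real.sqrt_pos.mpr (by positivity)
  have hS2 : S ^ 2 = φ1 * φ2 * X1 * X2 := Real.sq_sqrt (by positivity)
  have hs1 : Real.sqrt (φ2 * ((X1 - t) / (1 - t)) * (X2 / (1 - t)) / (φ1 - vb))
      = X2 / (1 - t) := by
    rw [show φ2 * ((X1 - t) / (1 - t)) * (X2 / (1 - t)) / (φ1 - vb)
        = (X2 / (1 - t)) ^ 2 by
      rw [hXt]; field_simp]
    exact Real.sqrt_sq (by positivity)
  have hs2 : Real.sqrt (φ1 * X1 * X2 / φ2) = S / φ2 := by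
    rw [show φ1 * X1 * X2 / φ2 = (S / φ2) ^ 2 by
      rw [div_pow, hS2]; field_simp]
    exact Real.sqrt_sq (by positivity)
  rw [hs1, hs2]
  have hdiff : (φ1 - vb) * (1 - (1 - X2 / (1 - t)) / ((X1 - t) / (1 - t))) - vb
      - φ1 * (X1 / (S / φ2) - 1)
      = ((φ1 - vb) * X2 + φ2 * (X1 + X2 - 1) - S) / X2 := by
    have hmul : φ2 * (X1 - t) = (φ1 - vb) * X2 := by
      rw [hXt]; field_simp
    rw [hXt]
    field_simp
    linear_combination hS2 - S * hmul
  constructor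
  · intro h
    have h0 : 0 ≤ ((φ1 - vb) * X2 + φ2 * (X1 + X2 - 1) - S) / X2 := by
      rw [← hdiff]; linarith
    have := (le_div_iff₀ hX2).mp h0
    linarith
  · intro h
    have h0 : 0 ≤ ((φ1 - vb) * X2 + φ2 * (X1 + X2 - 1) - S) / X2 :=
      div_nonneg (by linarith) hX2.le
    rw [← hdiff] at h0
    linarith
end

section
/- In the three-player setting with t* = X₁ − ((φ₁ − v_b)/φ₂)X₂ > 0 and the adversary's optimal Case 2 (i=2) splits after calling or folding, the adversary's payoff for calling is at least its payoff for folding if and only if 2v_b ≥ (X₁ − ((φ₁ − v_b)/φ₂)X₂)·(φ₂/X₂), i.e. 2v_b ≥ t*·φ₂/X₂. -/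
theorem three_player_call_vs_fold_iff
    (X1 X2 φ1 φ2 vb : ℝ)
    (hX1 : 0 < X1) (hX1' : X1 < 1) (hX2 : 0 < X2) (hX2' : X2 < 1)
    (hφ1 : 0 < φ1) (hφ2 : 0 < φ2) (hvb : 0 < vb) (hvbφ : vb < φ1)
    (t Xcall Xfold : ℝ)
    (ht : t = X1 - ((φ1 - vb) / φ2) * X2) (ht0 : 0 < t)
    (hXcall : Xcall =
      1 - Real.sqrt (φ2 * ((X1 - t) / (1 - t)) * (X2 / (1 - t)) / (φ1 - vb)))
    (hXfold : Xfold = 1 - Real.sqrt (φ2 * (X1 - t) * X2 / (φ1 - vb))) :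
    ((φ1 - vb) * (Xcall / ((X1 - t) / (1 - t)) - 1)
        + φ2 * ((1 - Xcall) / (X2 / (1 - t)) - 1) + vb
      ≥ (φ1 - vb) * (Xfold / (X1 - t) - 1)
        + φ2 * ((1 - Xfold) / X2 - 1) - vb)
    ↔ 2 * vb ≥ (X1 - ((φ1 - vb) / φ2) * X2) * (φ2 / X2) := by
  have hφ' : (0:ℝ) < φ1 - vb := by linarith
  have hφ'ne : φ1 - vb ≠ 0 := ne_of_gt hφ'
  have hφ2ne : φ2 ≠ 0 := ne_of_gt hφ2
  have hX2ne : X2 ≠ 0 := ne_of_gt hX2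
  have ht1 : t < 1 := by
    have : t < X1 := by
      rw [ht]
      have : 0 < ((φ1 - vb) / φ2) * X2 := by positivity
      linarith
    linarith
  have h1t : (0:ℝ) < 1 - t := by linarith
  have h1tne : (1 - t) ≠ 0 := ne_of_gt h1t
  have hXt : X1 - t = ((φ1 - vb) / φ2) * X2 := by rw [ht]; ring
  have hcall : (φ1 - vb) * (Xcall / ((X1 - t) / (1 - t)) - 1)
        + φ2 * ((1 - Xcall) / (X2 / (1 - t)) - 1) + vb
      = φ2 * (1 - t) / X2 - (φ1 - vb) - φ2 + vb := by
    rw [hXt]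
    field_simp
    ring
  have hfold : (φ1 - vb) * (Xfold / (X1 - t) - 1)
        + φ2 * ((1 - Xfold) / X2 - 1) - vb
      = φ2 / X2 - (φ1 - vb) - φ2 - vb := by
    rw [hXt]
    field_simp
    ring
  rw [hcall, hfold, ← ht]
  have key : φ2 * (1 - t) / X2 = φ2 / X2 - t * (φ2 / X2) := by
    field_simp
  rw [key]
  constructor
  · intro h; linarith
  · intro h; linarith
end
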